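/- Let a_{11}, a_{12}, a_{21}, a_{22}, b_1, b_2 ∈ ℝ satisfy b_1 + b_2 = 1, b_1(a_{11} + a_{12}) + b_2(a_{21} + a_{22}) = 1/2, a_{11} + a_{22} = 1/2, together with the third-order conditions b_1(a_{11} + a_{12})² + b_2(a_{21} + a_{22})² = 1/3 and b_1 a_{11}(a_{11} + a_{12}) + b_1 a_{12}(a_{21} + a_{22}) + b_2 a_{21}(a_{11} + a_{12}) + b_2 a_{22}(a_{21} + a_{22}) = 1/6. Then a_{12}a_{21} − a_{11}a_{22} = −1/12. -/
import Mathlib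


/-- A two-stage minimal-dissipation Runge–Kutta scheme
(`a₁₁ + a₂₂ = 1/2`) satisfying the order conditions up to third order
necessarily has `Y = a₁₂a₂₁ − a₁₁a₂₂ = −1/12`. -/
theorem two_stage_third_order_forces_Y
    (a11 a12 a21 a22 b1 b2 : ℝ)
    (h1 : b1 + b2 = 1)
    (h2 : b1 * (a11 + a12) + b2 * (a21 + a22) = 1 / 2)
    (h3 : a11 + a22 = 1 / 2)
    (h4 : b1 * (a11 + a12) ^ 2 + b2 * (a21 + a22) ^ 2 = 1 / 3)
    (h5 : b1 * a11 * (a11 + a12) + b1 * a12 * (a21 + a22)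
        + b2 * a21 * (a11 + a12) + b2 * a22 * (a21 + a22) = 1 / 6) :
    a12 * a21 - a11 * a22 = -(1 / 12) := by
  linear_combination
    ((a11 + a12) * (a21 + a22)
      - (a11 + a12 + a21 + a22 - 1/2) * (a11 + a12)
      + (a11 + a12 - a21 - a22) * a12) * h1
    - (1/2) * h2
    + ((a11 + a12 - a21 - a22) * b2 - (a11 + a12)) * h3
    + h5
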